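/- Let k ≥ 2. For every n, every partition of 𝒫(n) into t parts, each of which is S_k-free, satisfies (k−1)·t ≥ 2^{n−1} − ∑_{i=0}^{k−2} C(n−1, i); equivalently, f(n, S_k) ≥ 2^{n−1}/(k−1) − (1/(k−1))·∑_{i=0}^{k−2} C(n−1, i). -/

import Mathlib

/-- A family `F` of subsets of `[n]` contains a Berge star with `k` edges if there are
`k` distinct sets `E₁, …, E_k` in `F` together with `k + 1` pairwise distinct elements
`v, u₁, …, u_k` such that `{v, uᵢ} ⊆ Eᵢ` for each `i`. -/
def ContainsBergeStar {n : ℕ} (k : ℕ) (F : Set (Finset (Fin n))) : Prop :=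
  ∃ (E : Fin k → Finset (Fin n)) (v : Fin n) (u : Fin k → Fin n),
    Function.Injective E ∧ Function.Injective u ∧ (∀ i, v ≠ u i) ∧
    ∀ i, E i ∈ F ∧ v ∈ E i ∧ u i ∈ E i

/-- A family of subsets of `[n]` is `S_k`-free if it contains no Berge-`S_k`. -/
def StarFree {n : ℕ} (k : ℕ) (F : Set (Finset (Fin n))) : Prop :=
  ¬ ContainsBergeStar k F

/-- In an `S_k`-free family, at most `k - 1` members contain a fixed vertex `v` and
have at least `k` elements. -/
lemma fiber_small {n : ℕ} (k : ℕ) (hk : 2 ≤ k) (v : Fin n)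
    (F : Set (Finset (Fin n))) [DecidablePred (· ∈ F)] (hF : StarFree k F) :
    (Finset.univ.filter (fun A : Finset (Fin n) => v ∈ A ∧ k ≤ A.card ∧ A ∈ F)).card
      ≤ k - 1 := by
  classical
  by_contra h
  push_neg at h
  set G := Finset.univ.filter (fun A : Finset (Fin n) => v ∈ A ∧ k ≤ A.card ∧ A ∈ F)
    with hG
  have hkG : k ≤ G.card := by omega
  obtain ⟨s, hsG, hs⟩ := Finset.exists_subset_card_eq hkG
  have e := Finset.equivFinOfCardEq hs
  set E : Fin k → Finset (Fin n) := fun i => (e.symm i : Finset (Fin n)) with hE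
  have hEinj : Function.Injective E := fun i j hij => by
    apply e.symm.injective
    exact Subtype.ext hij
  have hEmem : ∀ i, E i ∈ G := fun i => hsG (e.symm i).2
  have hEprop : ∀ i, v ∈ E i ∧ k ≤ (E i).card ∧ E i ∈ F := fun i => by
    have := hEmem i
    rw [hG, Finset.mem_filter] at this
    exact this.2
  -- Hall's condition
  have hall : ∀ s : Finset (Fin k), s.card ≤ (s.biUnion (fun i => (E i).erase v)).card := by
    intro s
    rcases s.eq_empty_or_nonempty with rfl | ⟨i, hi⟩
    · simp
    have hsub : ∀ j ∈ s, (E j).erase v ⊆ s.biUnion (fun i => (E i).erase v) :=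
      fun j hj => Finset.subset_biUnion_of_mem (fun i => (E i).erase v) hj
    have hcardE : ∀ j, k - 1 ≤ ((E j).erase v).card := by
      intro j
      rw [Finset.card_erase_of_mem (hEprop j).1]
      have := (hEprop j).2.1
      omega
    have h1 : k - 1 ≤ (s.biUnion (fun i => (E i).erase v)).card :=
      le_trans (hcardE i) (Finset.card_le_card (hsub i hi))
    by_cases hsk : s.card ≤ k - 1
    · omega
    -- s.card = k, so s has two distinct elements
    have hk2 : 1 < s.card := by omega
    obtain ⟨a, ha, b, hb, hab⟩ := Finset.one_lt_card.mp hk2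
    by_contra hc
    push_neg at hc
    have hcle : (s.biUnion (fun i => (E i).erase v)).card ≤ k - 1 := by
      have := s.card_le_univ
      simp only [Finset.card_univ, Fintype.card_fin] at this
      omega
    have hea : (E a).erase v = s.biUnion (fun i => (E i).erase v) :=
      Finset.eq_of_subset_of_card_le (hsub a ha) (le_trans hcle (hcardE a))
    have heb : (E b).erase v = s.biUnion (fun i => (E i).erase v) :=
      Finset.eq_of_subset_of_card_le (hsub b hb) (le_trans hcle (hcardE b))
    have : E a = E b := by
      have h1 : insert v ((E a).erase v) = insert v ((E b).erase v) := by rw [hea, heb]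
      rwa [Finset.insert_erase (hEprop a).1, Finset.insert_erase (hEprop b).1] at h1
    exact hab (hEinj this)
  obtain ⟨u, huinj, humem⟩ :=
    (Finset.all_card_le_biUnion_card_iff_exists_injective (fun i => (E i).erase v)).mp hall
  exact hF ⟨E, v, u, hEinj, huinj,
    fun i => fun hv => (Finset.ne_of_mem_erase (humem i)) hv.symm,
    fun i => ⟨(hEprop i).2.2, (hEprop i).1, Finset.mem_of_mem_erase (humem i)⟩⟩

/-- For `k ≥ 2`, every partition of the power set of `[n]` into `t` parts, each
`S_k`-free, satisfies `(k - 1) · t ≥ 2 ^ (n - 1) - ∑_{i = 0}^{k - 2} C(n - 1, i)`. -/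
theorem f_Sk_lower (k : ℕ) (hk : 2 ≤ k) (n t : ℕ)
    (c : Finset (Fin n) → Fin t)
    (hfree : ∀ i : Fin t, StarFree k {A | c A = i}) :
    2 ^ (n - 1) - ∑ i ∈ Finset.range (k - 1), (n - 1).choose i ≤ (k - 1) * t := by
  classical
  rcases Nat.eq_zero_or_pos n with rfl | hn
  · have h1 : 1 ≤ ∑ i ∈ Finset.range (k - 1), (0 - 1).choose i := by
      calc 1 = Nat.choose 0 0 := by simp
      _ ≤ _ := Finset.single_le_sum (f := fun i => Nat.choose 0 i)
          (fun i _ => Nat.zero_le _) (by simp; omega)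
    simp only [Nat.zero_sub] at h1 ⊢
    omega
  set v : Fin n := ⟨0, hn⟩
  set U : Finset (Fin n) := Finset.univ.erase v with hU
  have hUcard : U.card = n - 1 := by
    rw [hU, Finset.card_erase_of_mem (Finset.mem_univ v), Finset.card_univ,
      Fintype.card_fin]
  set T : Finset (Finset (Fin n)) :=
    Finset.univ.filter (fun A : Finset (Fin n) => v ∈ A ∧ k ≤ A.card) with hT
  -- Counting: 2^(n-1) ≤ small sum + T.card
  have hsplit : (U.powerset.filter (fun B => k - 1 ≤ B.card)).card
      + (U.powerset.filter (fun B => ¬ (k - 1 ≤ B.card))).card = 2 ^ (n - 1) := by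
    rw [Finset.card_filter_add_card_filter_not, Finset.card_powerset, hUcard]
  have hsmall : (U.powerset.filter (fun B => ¬ (k - 1 ≤ B.card))).card
      ≤ ∑ i ∈ Finset.range (k - 1), (n - 1).choose i := by
    have hsub : (U.powerset.filter (fun B => ¬ (k - 1 ≤ B.card)))
        ⊆ (Finset.range (k - 1)).biUnion (fun j => U.powersetCard j) := by
      intro B hB
      rw [Finset.mem_filter, Finset.mem_powerset] at hB
      refine Finset.mem_biUnion.mpr ⟨B.card, Finset.mem_range.mpr (by omega), ?_⟩
      rw [Finset.mem_powersetCard]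
      exact ⟨hB.1, rfl⟩
    calc _ ≤ ((Finset.range (k - 1)).biUnion (fun j => U.powersetCard j)).card :=
          Finset.card_le_card hsub
      _ ≤ ∑ j ∈ Finset.range (k - 1), (U.powersetCard j).card :=
          Finset.card_biUnion_le
      _ = ∑ i ∈ Finset.range (k - 1), (n - 1).choose i := by
          simp [Finset.card_powersetCard, hUcard]
  have hbig : (U.powerset.filter (fun B => k - 1 ≤ B.card)).card ≤ T.card := by
    apply Finset.card_le_card_of_injOn (fun B => insert v B)
    · intro B hB
      rw [Finset.mem_coe, Finset.mem_filter, Finset.mem_powerset] at hB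
      have hvB : v ∉ B := fun h => (Finset.mem_erase.mp (hB.1 h)).1 rfl
      rw [hT, Finset.mem_coe, Finset.mem_filter]
      refine ⟨Finset.mem_univ _, Finset.mem_insert_self _ _, ?_⟩
      rw [Finset.card_insert_of_notMem hvB]
      omega
    · intro B hB B' hB' hins
      rw [Finset.mem_coe, Finset.mem_filter, Finset.mem_powerset] at hB hB'
      have hvB : v ∉ B := fun h => (Finset.mem_erase.mp (hB.1 h)).1 rfl
      have hvB' : v ∉ B' := fun h => (Finset.mem_erase.mp (hB'.1 h)).1 rfl
      have := congrArg (Finset.erase · v) hins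
      simpa [Finset.erase_insert hvB, Finset.erase_insert hvB'] using this
  -- Fiberwise bound
  have hTcard : T.card ≤ (k - 1) * t := by
    rw [Finset.card_eq_sum_card_fiberwise (f := c) (t := Finset.univ)
      (fun x _ => Finset.mem_univ _)]
    calc ∑ i : Fin t, (T.filter (fun A => c A = i)).card
        ≤ ∑ _i : Fin t, (k - 1) := by
          apply Finset.sum_le_sum
          intro i _
          have := fiber_small k hk v {A | c A = i} (hfree i)
          refine le_trans (le_of_eq ?_) this
          congr 1
          rw [hT, Finset.filter_filter]
          apply Finset.filter_congr
          intro A _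
          simp only [Set.mem_setOf_eq]
          tauto
      _ = (k - 1) * t := by
          simp [Finset.sum_const, Finset.card_univ, mul_comm]
  omega
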